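/- Let r ≥ 2 with r ≠ 4, and let v₁, …, v_r be distinct monomials of A whose F-span is a Kummer space. Then it is impossible that v_k·v_{k+1} = i·v_{k+1}·v_k for all 1 ≤ k ≤ r−1 and v_r·v₁ = i·v₁·v_r; that is, there are no directed cycles of length other than 4. -/

import Mathlib

/-- A fixed presentation of a tensor product of `n` cyclic algebras of degree 4
over `F`: generators `x k`, `y k` with `(x k)⁴ = αₖ·1`, `(y k)⁴ = βₖ·1`,
`x k · y k = i · (y k · x k)`, generators with different indices commuting, and the
`x k, y k` generating `A` as an `F`-algebra. -/
structure TensorCyclicPres (F A : Type*) [Field F] [Ring A] [Algebra F A]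
    (i : F) (n : ℕ) where
  x : Fin n → A
  y : Fin n → A
  α : Fin n → F
  β : Fin n → F
  α_ne_zero : ∀ k, α k ≠ 0
  β_ne_zero : ∀ k, β k ≠ 0
  x_pow : ∀ k, x k ^ 4 = algebraMap F A (α k)
  y_pow : ∀ k, y k ^ 4 = algebraMap F A (β k)
  xy_rel : ∀ k, x k * y k = i • (y k * x k)
  xx_comm : ∀ k l, k ≠ l → Commute (x k) (x l)
  yy_comm : ∀ k l, k ≠ l → Commute (y k) (y l)
  xy_comm : ∀ k l, k ≠ l → Commute (x k) (y l)
  generates : Algebra.adjoin F (Set.range x ∪ Set.range y) = ⊤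

/-- A monomial with respect to the presentation: an element of the form
`∏ₖ (x k)^{aₖ} (y k)^{bₖ}` with `0 ≤ aₖ, bₖ ≤ 3`. -/
def TensorCyclicPres.IsMonomial {F A : Type*} [Field F] [Ring A] [Algebra F A]
    {i : F} {n : ℕ} (P : TensorCyclicPres F A i n) (v : A) : Prop :=
  ∃ a b : Fin n → Fin 4,
    v = ((List.finRange n).map (fun k => P.x k ^ (a k : ℕ) * P.y k ^ (b k : ℕ))).prod

set_option linter.unusedSectionVars false
set_option linter.unusedVariables false
set_option maxHeartbeats 2000000

namespace St10

noncomputable section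

variable {F : Type*} [Field F] [CharZero F]

section Scalar
variable {i : F}

theorem i4 (hi : i ^ 2 = -1) : i ^ 4 = 1 := by
  have h : i ^ 4 = (i ^ 2) ^ 2 := by ring
  rw [h, hi]; ring

theorem i_ne_zero (hi : i ^ 2 = -1) : i ≠ 0 := by
  intro h
  have h2 : (i : F) ^ 2 = 0 := by rw [h]; ring
  rw [hi] at h2
  norm_num at h2

theorem ipow_mod (hi : i ^ 2 = -1) (n : ℕ) : i ^ n = i ^ (n % 4) := by
  conv_lhs => rw [← Nat.div_add_mod n 4]
  rw [pow_add, pow_mul, i4 hi, one_pow, one_mul]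

theorem ipow_val_add (hi : i ^ 2 = -1) (a b : ZMod 4) :
    i ^ (a + b).val = i ^ a.val * i ^ b.val := by
  rw [← pow_add, ZMod.val_add, ← ipow_mod hi]

theorem ipow_d_ne_one (hi : i ^ 2 = -1) : ∀ d, 0 < d → d < 4 → i ^ d ≠ 1 := by
  have h1 : i ≠ 1 := by
    intro h; rw [h] at hi; norm_num at hi
  have h2 : i ^ 2 ≠ 1 := by
    rw [hi]; intro h; norm_num at h
  intro d hd hd4
  interval_cases d
  · simpa using h1
  · exact h2
  · intro h
    have h4 : i ^ 4 = i := by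
      have h5 : i ^ 4 = i ^ 3 * i := by ring
      rw [h5, h, one_mul]
    rw [i4 hi] at h4; exact h1 h4.symm

theorem ipow_val_inj (hi : i ^ 2 = -1) {a b : ZMod 4} (h : i ^ a.val = i ^ b.val) : a = b := by
  have key : ∀ a b : ZMod 4, a.val ≤ b.val → i ^ a.val = i ^ b.val → a = b := by
    intro a b hle h
    have hb : i ^ b.val = i ^ a.val * i ^ (b.val - a.val) := by
      rw [← pow_add, Nat.add_sub_cancel' hle]
    rw [hb] at h
    have h1 : i ^ a.val * 1 = i ^ a.val * i ^ (b.val - a.val) := by rw [mul_one]; exact h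
    have h2 := mul_left_cancel₀ (pow_ne_zero a.val (i_ne_zero hi)) h1
    have hz : b.val - a.val = 0 := by
      by_contra hne
      exact ipow_d_ne_one hi _ (Nat.pos_of_ne_zero hne)
        (by have := ZMod.val_lt b; omega) h2.symm
    exact ZMod.val_injective 4 (by omega)
  rcases le_or_gt a.val b.val with hle | hlt
  · exact key a b hle h
  · exact (key b a hlt.le h.symm).symm

/-- ring hom ℤ[i] → F -/
def phi (i : F) (hi : i ^ 2 = -1) : GaussianInt →+* F where
  toFun z := (z.re : F) + (z.im : F) * i
  map_one' := by simp
  map_zero' := by simp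
  map_add' := fun z w => by
    simp only [Zsqrtd.re_add, Zsqrtd.im_add]
    push_cast; ring
  map_mul' := fun z w => by
    simp only [Zsqrtd.re_mul, Zsqrtd.im_mul]
    push_cast
    linear_combination (-(z.im : F) * w.im) * hi

theorem phi_intCast (hi : i ^ 2 = -1) (m : ℤ) : phi i hi (m : GaussianInt) = (m : F) := by
  show ((m : GaussianInt).re : F) + ((m : GaussianInt).im : F) * i = _
  simp

theorem phi_ne_zero (hi : i ^ 2 = -1) {z : GaussianInt} (hz : z ≠ 0) : phi i hi z ≠ 0 := by
  intro h
  have hc : phi i hi (z * star z) = 0 := by rw [map_mul, h, zero_mul]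
  rw [← Zsqrtd.norm_eq_mul_conj, phi_intCast hi] at hc
  have : z.norm = 0 := by exact_mod_cast hc
  exact hz (GaussianInt.norm_eq_zero.mp this)

theorem phi_sqrtd (hi : i ^ 2 = -1) : phi i hi Zsqrtd.sqrtd = i := by
  show ((Zsqrtd.sqrtd (d := -1)).re : F) + ((Zsqrtd.sqrtd (d := -1)).im : F) * i = i
  simp

end Scalar

section Quad
variable {A : Type*} [Ring A]

theorem polar4 (a b c d : A) :
    (a+b+c+d)^4 - ((a+b+c)^4 + (a+b+d)^4 + (a+c+d)^4 + (b+c+d)^4)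
      + ((a+b)^4 + (a+c)^4 + (a+d)^4 + (b+c)^4 + (b+d)^4 + (c+d)^4)
      - (a^4 + b^4 + c^4 + d^4)
    = a * (b * (c * d))
      + a * (b * (d * c))
      + a * (c * (b * d))
      + a * (c * (d * b))
      + a * (d * (b * c))
      + a * (d * (c * b))
      + b * (a * (c * d))
      + b * (a * (d * c))
      + b * (c * (a * d))
      + b * (c * (d * a))
      + b * (d * (a * c))
      + b * (d * (c * a))
      + c * (a * (b * d))
      + c * (a * (d * b))
      + c * (b * (a * d))
      + c * (b * (d * a))
      + c * (d * (a * b))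
      + c * (d * (b * a))
      + d * (a * (b * c))
      + d * (a * (c * b))
      + d * (b * (a * c))
      + d * (b * (c * a))
      + d * (c * (a * b))
      + d * (c * (b * a)) := by
  simp only [pow_succ, pow_zero, one_mul, mul_add, add_mul, mul_assoc]
  abel

end Quad

def zGzeta : GaussianInt := Zsqrtd.sqrtd

def zG (g21 g31 g32 g41 g42 g43 : ZMod 4) : GaussianInt :=
  1
  + zGzeta ^ (g43).val
  + zGzeta ^ (g32).val
  + zGzeta ^ (g32).val * zGzeta ^ (g42).val
  + zGzeta ^ (g42).val * zGzeta ^ (g43).val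
  + zGzeta ^ (g43).val * zGzeta ^ (g42).val * zGzeta ^ (g32).val
  + zGzeta ^ (g21).val
  + zGzeta ^ (g21).val * zGzeta ^ (g43).val
  + zGzeta ^ (g21).val * zGzeta ^ (g31).val
  + zGzeta ^ (g21).val * zGzeta ^ (g31).val * zGzeta ^ (g41).val
  + zGzeta ^ (g21).val * zGzeta ^ (g41).val * zGzeta ^ (g43).val
  + zGzeta ^ (g21).val * zGzeta ^ (g43).val * zGzeta ^ (g41).val * zGzeta ^ (g31).val
  + zGzeta ^ (g31).val * zGzeta ^ (g32).val
  + zGzeta ^ (g31).val * zGzeta ^ (g32).val * zGzeta ^ (g42).val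
  + zGzeta ^ (g32).val * zGzeta ^ (g31).val * zGzeta ^ (g21).val
  + zGzeta ^ (g32).val * zGzeta ^ (g31).val * zGzeta ^ (g21).val * zGzeta ^ (g41).val
  + zGzeta ^ (g31).val * zGzeta ^ (g32).val * zGzeta ^ (g41).val * zGzeta ^ (g42).val
  + zGzeta ^ (g32).val * zGzeta ^ (g31).val * zGzeta ^ (g42).val * zGzeta ^ (g41).val * zGzeta ^ (g21).val
  + zGzeta ^ (g41).val * zGzeta ^ (g42).val * zGzeta ^ (g43).val
  + zGzeta ^ (g41).val * zGzeta ^ (g43).val * zGzeta ^ (g42).val * zGzeta ^ (g32).val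
  + zGzeta ^ (g42).val * zGzeta ^ (g41).val * zGzeta ^ (g43).val * zGzeta ^ (g21).val
  + zGzeta ^ (g42).val * zGzeta ^ (g43).val * zGzeta ^ (g41).val * zGzeta ^ (g21).val * zGzeta ^ (g31).val
  + zGzeta ^ (g43).val * zGzeta ^ (g41).val * zGzeta ^ (g42).val * zGzeta ^ (g31).val * zGzeta ^ (g32).val
  + zGzeta ^ (g43).val * zGzeta ^ (g42).val * zGzeta ^ (g41).val * zGzeta ^ (g32).val * zGzeta ^ (g31).val * zGzeta ^ (g21).val

theorem phi_zG {F : Type*} [Field F] [CharZero F] {i : F} (hi : i ^ 2 = -1)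
    (g21 g31 g32 g41 g42 g43 : ZMod 4) :
    phi i hi (zG g21 g31 g32 g41 g42 g43) =
      ((1:F)
      + i ^ (g43).val
      + i ^ (g32).val
      + i ^ (g32).val * i ^ (g42).val
      + i ^ (g42).val * i ^ (g43).val
      + i ^ (g43).val * i ^ (g42).val * i ^ (g32).val
      + i ^ (g21).val
      + i ^ (g21).val * i ^ (g43).val
      + i ^ (g21).val * i ^ (g31).val
      + i ^ (g21).val * i ^ (g31).val * i ^ (g41).val
      + i ^ (g21).val * i ^ (g41).val * i ^ (g43).val
      + i ^ (g21).val * i ^ (g43).val * i ^ (g41).val * i ^ (g31).val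
      + i ^ (g31).val * i ^ (g32).val
      + i ^ (g31).val * i ^ (g32).val * i ^ (g42).val
      + i ^ (g32).val * i ^ (g31).val * i ^ (g21).val
      + i ^ (g32).val * i ^ (g31).val * i ^ (g21).val * i ^ (g41).val
      + i ^ (g31).val * i ^ (g32).val * i ^ (g41).val * i ^ (g42).val
      + i ^ (g32).val * i ^ (g31).val * i ^ (g42).val * i ^ (g41).val * i ^ (g21).val
      + i ^ (g41).val * i ^ (g42).val * i ^ (g43).val
      + i ^ (g41).val * i ^ (g43).val * i ^ (g42).val * i ^ (g32).val
      + i ^ (g42).val * i ^ (g41).val * i ^ (g43).val * i ^ (g21).val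
      + i ^ (g42).val * i ^ (g43).val * i ^ (g41).val * i ^ (g21).val * i ^ (g31).val
      + i ^ (g43).val * i ^ (g41).val * i ^ (g42).val * i ^ (g31).val * i ^ (g32).val
      + i ^ (g43).val * i ^ (g42).val * i ^ (g41).val * i ^ (g32).val * i ^ (g31).val * i ^ (g21).val) := by
  simp only [zG, zGzeta, map_add, map_mul, map_pow, map_one, phi_sqrtd hi]

theorem quadCore {F A : Type*} [Field F] [CharZero F] [Ring A] [Algebra F A]
    {i : F} (hi : i ^ 2 = -1)
    (V : Submodule F A) (hK : ∀ u ∈ V, u ^ 4 ∈ Submodule.span F {(1:A)})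
    {w1 w2 w3 w4 : A} (m1 : w1 ∈ V) (m2 : w2 ∈ V) (m3 : w3 ∈ V) (m4 : w4 ∈ V)
    {g21 g31 g32 g41 g42 g43 : ZMod 4}
    (h21 : w2 * w1 = i ^ g21.val • (w1 * w2))
    (h31 : w3 * w1 = i ^ g31.val • (w1 * w3))
    (h32 : w3 * w2 = i ^ g32.val • (w2 * w3))
    (h41 : w4 * w1 = i ^ g41.val • (w1 * w4))
    (h42 : w4 * w2 = i ^ g42.val • (w2 * w4))
    (h43 : w4 * w3 = i ^ g43.val • (w3 * w4)) :
    phi i hi (zG g21 g31 g32 g41 g42 g43) • (w1 * (w2 * (w3 * w4)))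
      ∈ Submodule.span F {(1:A)} := by
  have h21' : ∀ z, w2 * (w1 * z) = i ^ g21.val • (w1 * (w2 * z)) := fun z => by
    rw [← mul_assoc, h21, smul_mul_assoc, mul_assoc]
  have h31' : ∀ z, w3 * (w1 * z) = i ^ g31.val • (w1 * (w3 * z)) := fun z => by
    rw [← mul_assoc, h31, smul_mul_assoc, mul_assoc]
  have h32' : ∀ z, w3 * (w2 * z) = i ^ g32.val • (w2 * (w3 * z)) := fun z => by
    rw [← mul_assoc, h32, smul_mul_assoc, mul_assoc]
  have h41' : ∀ z, w4 * (w1 * z) = i ^ g41.val • (w1 * (w4 * z)) := fun z => by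
    rw [← mul_assoc, h41, smul_mul_assoc, mul_assoc]
  have h42' : ∀ z, w4 * (w2 * z) = i ^ g42.val • (w2 * (w4 * z)) := fun z => by
    rw [← mul_assoc, h42, smul_mul_assoc, mul_assoc]
  have h43' : ∀ z, w4 * (w3 * z) = i ^ g43.val • (w3 * (w4 * z)) := fun z => by
    rw [← mul_assoc, h43, smul_mul_assoc, mul_assoc]
  have key : (w1+w2+w3+w4)^4 - ((w1+w2+w3)^4 + (w1+w2+w4)^4 + (w1+w3+w4)^4 + (w2+w3+w4)^4)
      + ((w1+w2)^4 + (w1+w3)^4 + (w1+w4)^4 + (w2+w3)^4 + (w2+w4)^4 + (w3+w4)^4)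
      - (w1^4 + w2^4 + w3^4 + w4^4)
      = phi i hi (zG g21 g31 g32 g41 g42 g43) • (w1 * (w2 * (w3 * w4))) := by
    rw [polar4, phi_zG hi]
    simp only [h21', h31', h32', h41', h42', h43', h21, h31, h32, h41, h42, h43,
      mul_smul_comm, smul_smul]
    module
  rw [← key]
  have S := Submodule.span F {(1:A)}
  refine Submodule.sub_mem _ (Submodule.add_mem _ (Submodule.sub_mem _ ?_ ?_) ?_) ?_
  · exact hK _ (V.add_mem (V.add_mem (V.add_mem m1 m2) m3) m4)
  · refine Submodule.add_mem _ (Submodule.add_mem _ (Submodule.add_mem _ ?_ ?_) ?_) ?_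
    · exact hK _ (V.add_mem (V.add_mem m1 m2) m3)
    · exact hK _ (V.add_mem (V.add_mem m1 m2) m4)
    · exact hK _ (V.add_mem (V.add_mem m1 m3) m4)
    · exact hK _ (V.add_mem (V.add_mem m2 m3) m4)
  · refine Submodule.add_mem _ (Submodule.add_mem _ (Submodule.add_mem _ (Submodule.add_mem _ (Submodule.add_mem _ ?_ ?_) ?_) ?_) ?_) ?_
    · exact hK _ (V.add_mem m1 m2)
    · exact hK _ (V.add_mem m1 m3)
    · exact hK _ (V.add_mem m1 m4)
    · exact hK _ (V.add_mem m2 m3)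
    · exact hK _ (V.add_mem m2 m4)
    · exact hK _ (V.add_mem m3 m4)
  · refine Submodule.add_mem _ (Submodule.add_mem _ (Submodule.add_mem _ ?_ ?_) ?_) ?_
    · exact hK _ m1
    · exact hK _ m2
    · exact hK _ m3
    · exact hK _ m4


section UC
variable {F A : Type*} [Field F] [CharZero F] [Ring A] [Algebra F A]

/-- `u * w = i^γ • (w * u)` -/
def UC (i : F) (u w : A) (γ : ZMod 4) : Prop := u * w = i ^ γ.val • (w * u)

variable {i : F}

theorem UC.of_commute {u w : A} (h : Commute u w) : UC i u w 0 := by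
  show u * w = i ^ (0 : ZMod 4).val • (w * u)
  rw [show (0 : ZMod 4).val = 0 from rfl, pow_zero, one_smul, h.eq]

theorem UC.refl (u : A) : UC i u u 0 := UC.of_commute (Commute.refl u)

theorem UC.one_right (u : A) : UC i u 1 0 := UC.of_commute (Commute.one_right u)

theorem UC.mul_right (hi : i ^ 2 = -1) {u w w' : A} {γ γ' : ZMod 4}
    (h1 : UC i u w γ) (h2 : UC i u w' γ') : UC i u (w * w') (γ + γ') := by
  show u * (w * w') = i ^ (γ + γ').val • (w * w' * u)
  rw [← mul_assoc, h1, smul_mul_assoc, mul_assoc, h2, mul_smul_comm, smul_smul,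
    ← ipow_val_add hi, mul_assoc]

theorem UC.mul_left (hi : i ^ 2 = -1) {u u' w : A} {γ γ' : ZMod 4}
    (h1 : UC i u w γ) (h2 : UC i u' w γ') : UC i (u * u') w (γ + γ') := by
  show u * u' * w = i ^ (γ + γ').val • (w * (u * u'))
  rw [mul_assoc, h2, mul_smul_comm, ← mul_assoc, h1, smul_mul_assoc, smul_smul,
    ← ipow_val_add hi, mul_assoc, add_comm γ' γ]

theorem UC.symm (hi : i ^ 2 = -1) {u w : A} {γ : ZMod 4} (h : UC i u w γ) :
    UC i w u (-γ) := by
  show w * u = i ^ (-γ).val • (u * w)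
  rw [h, smul_smul, ← ipow_val_add hi, neg_add_cancel,
    show (0 : ZMod 4).val = 0 from rfl, pow_zero, one_smul]

theorem UC.pow_right (hi : i ^ 2 = -1) {u w : A} {γ : ZMod 4} (h : UC i u w γ) (m : ℕ) :
    UC i u (w ^ m) ((m : ZMod 4) * γ) := by
  induction m with
  | zero => rw [pow_zero]; simpa using UC.one_right u
  | succ k ih =>
      have h2 := UC.mul_right hi ih h
      rw [← pow_succ] at h2
      exact (by push_cast; ring : ((k+1 : ℕ) : ZMod 4) * γ = (k : ZMod 4) * γ + γ) ▸ h2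

theorem UC.pow_left (hi : i ^ 2 = -1) {u w : A} {γ : ZMod 4} (h : UC i u w γ) (m : ℕ) :
    UC i (u ^ m) w ((m : ZMod 4) * γ) := by
  induction m with
  | zero => rw [pow_zero]; simpa using (UC.one_right w).symm hi
  | succ k ih =>
      have h2 := UC.mul_left hi ih h
      rw [← pow_succ] at h2
      exact (by push_cast; ring : ((k+1 : ℕ) : ZMod 4) * γ = (k : ZMod 4) * γ + γ) ▸ h2

theorem UC.list_right (hi : i ^ 2 = -1) {ι : Type*} {u : A} (f : ι → A) (g : ι → ZMod 4) :
    ∀ l : List ι, (∀ s ∈ l, UC i u (f s) (g s)) →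
      UC i u ((l.map f).prod) ((l.map g).sum)
  | [], _ => by simpa using UC.one_right u
  | (s :: t), h => by
      simp only [List.map_cons, List.prod_cons, List.sum_cons]
      exact UC.mul_right hi (h s (by simp)) (UC.list_right hi f g t fun x hx => h x (by simp [hx]))

theorem smul_cancel_ne {s t : F} {x : A} (hx : x ≠ 0) (h : s • x = t • x) : s = t := by
  by_contra hne
  have h1 : (s - t) • x = 0 := by rw [sub_smul, h, sub_self]
  have h2 : (s - t)⁻¹ • ((s - t) • x) = 0 := by rw [h1, smul_zero]
  rw [smul_smul, inv_mul_cancel₀ (sub_ne_zero.mpr hne), one_smul] at h2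
  exact hx h2

theorem UC.unique (hi : i ^ 2 = -1) {u w : A} {γ γ' : ZMod 4}
    (h1 : UC i u w γ) (h2 : UC i u w γ') (hne : w * u ≠ 0) : γ = γ' :=
  ipow_val_inj hi (smul_cancel_ne hne ((Eq.symm h1).trans h2))

end UC

section Mono
variable {F A : Type*} [Field F] [CharZero F] [DivisionRing A] [Algebra F A]
variable {i : F} {n : ℕ} (P : TensorCyclicPres F A i n)

/-- the normal-form monomial -/
def mexp (a b : Fin n → Fin 4) : A :=
  ((List.finRange n).map (fun k => P.x k ^ (a k : ℕ) * P.y k ^ (b k : ℕ))).prod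

theorem x_ne_zero (k : Fin n) : P.x k ≠ 0 := by
  intro h
  have h4 : P.x k ^ 4 = 0 := by rw [h]; simp
  rw [P.x_pow k] at h4
  exact P.α_ne_zero k ((map_eq_zero_iff _ (algebraMap F A).injective).mp h4)

theorem y_ne_zero (k : Fin n) : P.y k ≠ 0 := by
  intro h
  have h4 : P.y k ^ 4 = 0 := by rw [h]; simp
  rw [P.y_pow k] at h4
  exact P.β_ne_zero k ((map_eq_zero_iff _ (algebraMap F A).injective).mp h4)

theorem mexp_ne_zero (a b : Fin n → Fin 4) : mexp P a b ≠ 0 := by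
  apply List.prod_ne_zero
  intro hx
  simp only [List.mem_map] at hx
  obtain ⟨k, -, hk⟩ := hx
  exact mul_ne_zero (pow_ne_zero _ (x_ne_zero P k)) (pow_ne_zero _ (y_ne_zero P k)) hk

theorem UC_xy (hi : i ^ 2 = -1) (k : Fin n) : UC i (P.x k) (P.y k) 1 := by
  show P.x k * P.y k = i ^ (1 : ZMod 4).val • (P.y k * P.x k)
  rw [show (1 : ZMod 4).val = 1 from rfl, pow_one]
  exact P.xy_rel k

/-- x_t q-commutes past a full monomial with exponent `b t` -/
theorem UC_x_mexp (hi : i ^ 2 = -1) (a b : Fin n → Fin 4) (t : Fin n) :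
    UC i (P.x t) (mexp P a b) (((b t : ℕ) : ZMod 4)) := by
  have h := UC.list_right (u := P.x t) hi
    (fun k => P.x k ^ (a k : ℕ) * P.y k ^ (b k : ℕ))
    (fun k => if k = t then ((b t : ℕ) : ZMod 4) else 0)
    (List.finRange n) ?_
  · have hsum : ((List.finRange n).map
        (fun k => if k = t then ((b t : ℕ) : ZMod 4) else 0)).sum
        = ((b t : ℕ) : ZMod 4) := by
      rw [← Fin.sum_univ_def]
      simp
    rwa [hsum] at h
  · intro s _
    by_cases hst : s = t
    · subst hst
      rw [if_pos rfl]
      have h1 : UC i (P.x s) (P.x s ^ (a s : ℕ)) 0 :=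
        UC.of_commute (Commute.pow_right (Commute.refl _) _)
      have h2 : UC i (P.x s) (P.y s ^ (b s : ℕ)) (((b s : ℕ) : ZMod 4) * 1) :=
        UC.pow_right hi (UC_xy P hi s) _
      have h3 := UC.mul_right hi h1 h2
      rw [zero_add, mul_one] at h3
      exact h3
    · rw [if_neg hst]
      exact UC.of_commute
        ((Commute.pow_right (P.xx_comm t s (fun h => hst h.symm)) _).mul_right
          (Commute.pow_right (P.xy_comm t s (fun h => hst h.symm)) _))

/-- y_t q-commutes: `y_t * w = i^{-(a t)} • (w * y_t)` -/
theorem UC_y_mexp (hi : i ^ 2 = -1) (a b : Fin n → Fin 4) (t : Fin n) :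
    UC i (P.y t) (mexp P a b) (-((a t : ℕ) : ZMod 4)) := by
  have h := UC.list_right (u := P.y t) hi
    (fun k => P.x k ^ (a k : ℕ) * P.y k ^ (b k : ℕ))
    (fun k => if k = t then -((a t : ℕ) : ZMod 4) else 0)
    (List.finRange n) ?_
  · have hsum : ((List.finRange n).map
        (fun k => if k = t then -((a t : ℕ) : ZMod 4) else 0)).sum
        = -((a t : ℕ) : ZMod 4) := by
      rw [← Fin.sum_univ_def]
      simp
    rwa [hsum] at h
  · intro s _
    by_cases hst : s = t
    · subst hst
      rw [if_pos rfl]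
      have h1 : UC i (P.y s) (P.x s ^ (a s : ℕ)) (((a s : ℕ) : ZMod 4) * (-1)) :=
        UC.pow_right hi ((UC_xy P hi s).symm hi) _
      have h2 : UC i (P.y s) (P.y s ^ (b s : ℕ)) 0 :=
        UC.of_commute (Commute.pow_right (Commute.refl _) _)
      have h3 := UC.mul_right hi h1 h2
      rw [add_zero] at h3
      have he : ((a s : ℕ) : ZMod 4) * (-1) = -((a s : ℕ) : ZMod 4) := by ring
      rwa [he] at h3
    · rw [if_neg hst]
      exact UC.of_commute
        (((P.xy_comm s t hst).symm.pow_right _).mul_right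
          (Commute.pow_right (P.yy_comm t s (fun h => hst h.symm)) _))

/-- any two normal-form monomials q-commute -/
theorem UC_mexp_mexp (hi : i ^ 2 = -1) (a b a' b' : Fin n → Fin 4) :
    ∃ γ, UC i (mexp P a b) (mexp P a' b') γ := by
  suffices h : ∀ l : List (Fin n),
      ∃ γ, UC i ((l.map (fun k => P.x k ^ (a k : ℕ) * P.y k ^ (b k : ℕ))).prod)
        (mexp P a' b') γ by
    exact h _
  intro l
  induction l with
  | nil =>
      exact ⟨0, by simpa using (UC.one_right _).symm hi⟩
  | cons s t ih =>
      obtain ⟨γ, hγ⟩ := ih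
      have hx : UC i (P.x s) (mexp P a' b') (((b' s : ℕ) : ZMod 4)) := UC_x_mexp P hi a' b' s
      have hy : UC i (P.y s) (mexp P a' b') (-((a' s : ℕ) : ZMod 4)) :=
        ((UC_y_mexp P hi a' b' s))
      have hxp := UC.pow_left hi hx (a s : ℕ)
      have hyp := UC.pow_left hi hy (b s : ℕ)
      have hf := UC.mul_left hi hxp hyp
      have := UC.mul_left hi hf hγ
      exact ⟨_, by simpa only [List.map_cons, List.prod_cons, mul_assoc] using this⟩

end Mono

section Comb
variable {I : Type*} (c : I → I → ZMod 4)

theorem zcases : ∀ z : ZMod 4, z = 0 ∨ z = 1 ∨ z = 2 ∨ z = 3 := by decide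



theorem La (hdiag : ∀ k, c k k = 0) (hskew : ∀ k l, c l k = -c k l)
    (hR0 : ∀ k l, k ≠ l → c k l ≠ 0)
    (hlin : ∀ k1 k2 k3 k4 j : I,
      zG (c k2 k1) (c k3 k1) (c k3 k2) (c k4 k1) (c k4 k2) (c k4 k3) ≠ 0 →
      c j k1 + c j k2 + c j k3 + c j k4 = 0)
    {p0 p1 p2 : I} (d01 : p0 ≠ p1) (d12 : p1 ≠ p2) (d02 : p0 ≠ p2)
    (e01 : c p0 p1 = 1) (e12 : c p1 p2 = 1) : c p0 p2 = 1 ∨ c p0 p2 = 2 := by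
  rcases zcases (c p0 p2) with h02 | h02 | h02 | h02
  · exact absurd h02 (hR0 p0 p2 d02)
  · exact Or.inl h02
  · exact Or.inr h02
  · exfalso
    have b10 : c p1 p0 = 3 := by rw [hskew p0 p1, e01]; decide
    have b20 : c p2 p0 = 1 := by rw [hskew p0 p2, h02]; decide
    have b21 : c p2 p1 = 3 := by rw [hskew p1 p2, e12]; decide
    have hq := hlin p0 p0 p1 p2 p1 (by rw [hdiag p0, b10, b20, b21]; decide)
    rw [b10, hdiag p1, e12] at hq
    exact absurd hq (by decide)

theorem Lc (hdiag : ∀ k, c k k = 0) (hskew : ∀ k l, c l k = -c k l)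
    (hR0 : ∀ k l, k ≠ l → c k l ≠ 0)
    (hlin : ∀ k1 k2 k3 k4 j : I,
      zG (c k2 k1) (c k3 k1) (c k3 k2) (c k4 k1) (c k4 k2) (c k4 k3) ≠ 0 →
      c j k1 + c j k2 + c j k3 + c j k4 = 0)
    {p0 p1 p2 p3 : I} (d01 : p0 ≠ p1) (d02 : p0 ≠ p2) (d03 : p0 ≠ p3)
    (d12 : p1 ≠ p2) (d13 : p1 ≠ p3) (d23 : p2 ≠ p3)
    (e01 : c p0 p1 = 1) (e12 : c p1 p2 = 1) (e23 : c p2 p3 = 1) :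
    (c p0 p2 = 1 ∧ c p1 p3 = 1 ∧ c p0 p3 = 1) ∨
    (c p0 p2 = 1 ∧ c p1 p3 = 2 ∧ c p0 p3 = 1) ∨
    (c p0 p2 = 2 ∧ c p1 p3 = 1 ∧ c p0 p3 = 1) ∨
    (c p0 p2 = 2 ∧ c p1 p3 = 2 ∧ c p0 p3 = 3) := by
  rcases La c hdiag hskew hR0 hlin d01 d12 d02 e01 e12 with h02 | h02 <;>
    rcases La c hdiag hskew hR0 hlin d12 d23 d13 e12 e23 with h13 | h13 <;>
      rcases zcases (c p0 p3) with h03 | h03 | h03 | h03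
  · exact absurd h03 (hR0 p0 p3 d03)
  · exact Or.inl ⟨h02, h13, h03⟩
  · exfalso
    have b10 : c p1 p0 = 3 := by rw [hskew p0 p1, e01]; decide
    have b20 : c p2 p0 = 3 := by rw [hskew p0 p2, h02]; decide
    have b21 : c p2 p1 = 3 := by rw [hskew p1 p2, e12]; decide
    have b30 : c p3 p0 = 2 := by rw [hskew p0 p3, h03]; decide
    have b31 : c p3 p1 = 3 := by rw [hskew p1 p3, h13]; decide
    have hq := hlin p0 p1 p1 p3 p2 (by rw [b10, hdiag p1, b30, b31]; decide)
    rw [b20, b21, e23] at hq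
    exact absurd hq (by decide)
  · exfalso
    have b10 : c p1 p0 = 3 := by rw [hskew p0 p1, e01]; decide
    have b30 : c p3 p0 = 1 := by rw [hskew p0 p3, h03]; decide
    have b31 : c p3 p1 = 3 := by rw [hskew p1 p3, h13]; decide
    have hq := hlin p0 p0 p1 p3 p1 (by rw [hdiag p0, b10, b30, b31]; decide)
    rw [b10, hdiag p1, h13] at hq
    exact absurd hq (by decide)
  · exact absurd h03 (hR0 p0 p3 d03)
  · exact Or.inr (Or.inl ⟨h02, h13, h03⟩)
  · exfalso
    have b10 : c p1 p0 = 3 := by rw [hskew p0 p1, e01]; decide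
    have b30 : c p3 p0 = 2 := by rw [hskew p0 p3, h03]; decide
    have hq := hlin p0 p0 p3 p3 p1 (by rw [hdiag p0, b30, hdiag p3]; decide)
    rw [b10, h13] at hq
    exact absurd hq (by decide)
  · exfalso
    have b10 : c p1 p0 = 3 := by rw [hskew p0 p1, e01]; decide
    have b20 : c p2 p0 = 3 := by rw [hskew p0 p2, h02]; decide
    have b21 : c p2 p1 = 3 := by rw [hskew p1 p2, e12]; decide
    have b30 : c p3 p0 = 1 := by rw [hskew p0 p3, h03]; decide
    have b31 : c p3 p1 = 2 := by rw [hskew p1 p3, h13]; decide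
    have hq := hlin p0 p0 p1 p3 p2 (by rw [hdiag p0, b10, b30, b31]; decide)
    rw [b20, b21, e23] at hq
    exact absurd hq (by decide)
  · exact absurd h03 (hR0 p0 p3 d03)
  · exact Or.inr (Or.inr (Or.inl ⟨h02, h13, h03⟩))
  · exfalso
    have b20 : c p2 p0 = 2 := by rw [hskew p0 p2, h02]; decide
    have b30 : c p3 p0 = 2 := by rw [hskew p0 p3, h03]; decide
    have b32 : c p3 p2 = 3 := by rw [hskew p2 p3, e23]; decide
    have hq := hlin p0 p0 p2 p2 p3 (by rw [hdiag p0, b20, hdiag p2]; decide)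
    rw [b30, b32] at hq
    exact absurd hq (by decide)
  · exfalso
    have b10 : c p1 p0 = 3 := by rw [hskew p0 p1, e01]; decide
    have b30 : c p3 p0 = 1 := by rw [hskew p0 p3, h03]; decide
    have b31 : c p3 p1 = 3 := by rw [hskew p1 p3, h13]; decide
    have hq := hlin p0 p0 p1 p3 p1 (by rw [hdiag p0, b10, b30, b31]; decide)
    rw [b10, hdiag p1, h13] at hq
    exact absurd hq (by decide)
  · exact absurd h03 (hR0 p0 p3 d03)
  · exfalso
    have b10 : c p1 p0 = 3 := by rw [hskew p0 p1, e01]; decide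
    have b20 : c p2 p0 = 2 := by rw [hskew p0 p2, h02]; decide
    have b21 : c p2 p1 = 3 := by rw [hskew p1 p2, e12]; decide
    have b30 : c p3 p0 = 3 := by rw [hskew p0 p3, h03]; decide
    have b31 : c p3 p1 = 2 := by rw [hskew p1 p3, h13]; decide
    have b32 : c p3 p2 = 3 := by rw [hskew p2 p3, e23]; decide
    have hq := hlin p0 p1 p1 p2 p3 (by rw [b10, hdiag p1, b20, b21]; decide)
    rw [b30, b31, b32] at hq
    exact absurd hq (by decide)
  · exfalso
    have b20 : c p2 p0 = 2 := by rw [hskew p0 p2, h02]; decide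
    have b30 : c p3 p0 = 2 := by rw [hskew p0 p3, h03]; decide
    have b32 : c p3 p2 = 3 := by rw [hskew p2 p3, e23]; decide
    have hq := hlin p0 p0 p2 p2 p3 (by rw [hdiag p0, b20, hdiag p2]; decide)
    rw [b30, b32] at hq
    exact absurd hq (by decide)
  · exact Or.inr (Or.inr (Or.inr ⟨h02, h13, h03⟩))

theorem W5 (hdiag : ∀ k, c k k = 0) (hskew : ∀ k l, c l k = -c k l)
    (hR0 : ∀ k l, k ≠ l → c k l ≠ 0)
    (hlin : ∀ k1 k2 k3 k4 j : I,
      zG (c k2 k1) (c k3 k1) (c k3 k2) (c k4 k1) (c k4 k2) (c k4 k3) ≠ 0 →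
      c j k1 + c j k2 + c j k3 + c j k4 = 0)
    {p0 p1 p2 p3 p4 : I} (d01 : p0 ≠ p1) (d02 : p0 ≠ p2) (d03 : p0 ≠ p3)
    (d04 : p0 ≠ p4) (d12 : p1 ≠ p2) (d13 : p1 ≠ p3) (d14 : p1 ≠ p4)
    (d23 : p2 ≠ p3) (d24 : p2 ≠ p4) (d34 : p3 ≠ p4)
    (e01 : c p0 p1 = 1) (e12 : c p1 p2 = 1) (e23 : c p2 p3 = 1) (e34 : c p3 p4 = 1) :
    c p0 p4 = 1 := by
  rcases Lc c hdiag hskew hR0 hlin d01 d02 d03 d12 d13 d23 e01 e12 e23 with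
    ⟨h02, h13, h03⟩ | ⟨h02, h13, h03⟩ | ⟨h02, h13, h03⟩ | ⟨h02, h13, h03⟩ <;>
    rcases Lc c hdiag hskew hR0 hlin d12 d13 d14 d23 d24 d34 e12 e23 e34 with
      ⟨h13b, h24, h14⟩ | ⟨h13b, h24, h14⟩ | ⟨h13b, h24, h14⟩ | ⟨h13b, h24, h14⟩ <;>
      rcases zcases (c p0 p4) with h04 | h04 | h04 | h04
  · exact absurd h04 (hR0 p0 p4 d04)
  · exact h04
  · exfalso
    have b10 : c p1 p0 = 3 := by rw [hskew p0 p1, e01]; decide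
    have b20 : c p2 p0 = 3 := by rw [hskew p0 p2, h02]; decide
    have b21 : c p2 p1 = 3 := by rw [hskew p1 p2, e12]; decide
    have b40 : c p4 p0 = 2 := by rw [hskew p0 p4, h04]; decide
    have b41 : c p4 p1 = 3 := by rw [hskew p1 p4, h14]; decide
    have hq := hlin p0 p1 p1 p4 p2 (by rw [b10, hdiag p1, b40, b41]; decide)
    rw [b20, b21, h24] at hq
    exact absurd hq (by decide)
  · exfalso
    have b10 : c p1 p0 = 3 := by rw [hskew p0 p1, e01]; decide
    have b40 : c p4 p0 = 1 := by rw [hskew p0 p4, h04]; decide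
    have b41 : c p4 p1 = 3 := by rw [hskew p1 p4, h14]; decide
    have hq := hlin p0 p0 p1 p4 p1 (by rw [hdiag p0, b10, b40, b41]; decide)
    rw [b10, hdiag p1, h14] at hq
    exact absurd hq (by decide)
  · exact absurd h04 (hR0 p0 p4 d04)
  · exact h04
  · exfalso
    have b20 : c p2 p0 = 3 := by rw [hskew p0 p2, h02]; decide
    have b40 : c p4 p0 = 2 := by rw [hskew p0 p4, h04]; decide
    have hq := hlin p0 p0 p4 p4 p2 (by rw [hdiag p0, b40, hdiag p4]; decide)
    rw [b20, h24] at hq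
    exact absurd hq (by decide)
  · exfalso
    have b10 : c p1 p0 = 3 := by rw [hskew p0 p1, e01]; decide
    have b40 : c p4 p0 = 1 := by rw [hskew p0 p4, h04]; decide
    have b41 : c p4 p1 = 3 := by rw [hskew p1 p4, h14]; decide
    have hq := hlin p0 p0 p1 p4 p1 (by rw [hdiag p0, b10, b40, b41]; decide)
    rw [b10, hdiag p1, h14] at hq
    exact absurd hq (by decide)
  · rw [h13] at h13b; exact absurd h13b (by decide)
  · rw [h13] at h13b; exact absurd h13b (by decide)
  · rw [h13] at h13b; exact absurd h13b (by decide)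
  · rw [h13] at h13b; exact absurd h13b (by decide)
  · rw [h13] at h13b; exact absurd h13b (by decide)
  · rw [h13] at h13b; exact absurd h13b (by decide)
  · rw [h13] at h13b; exact absurd h13b (by decide)
  · rw [h13] at h13b; exact absurd h13b (by decide)
  · rw [h13] at h13b; exact absurd h13b (by decide)
  · rw [h13] at h13b; exact absurd h13b (by decide)
  · rw [h13] at h13b; exact absurd h13b (by decide)
  · rw [h13] at h13b; exact absurd h13b (by decide)
  · rw [h13] at h13b; exact absurd h13b (by decide)
  · rw [h13] at h13b; exact absurd h13b (by decide)
  · rw [h13] at h13b; exact absurd h13b (by decide)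
  · rw [h13] at h13b; exact absurd h13b (by decide)
  · exact absurd h04 (hR0 p0 p4 d04)
  · exact h04
  · exfalso
    have b10 : c p1 p0 = 3 := by rw [hskew p0 p1, e01]; decide
    have b20 : c p2 p0 = 3 := by rw [hskew p0 p2, h02]; decide
    have b21 : c p2 p1 = 3 := by rw [hskew p1 p2, e12]; decide
    have b40 : c p4 p0 = 2 := by rw [hskew p0 p4, h04]; decide
    have b41 : c p4 p1 = 3 := by rw [hskew p1 p4, h14]; decide
    have hq := hlin p0 p1 p1 p4 p2 (by rw [b10, hdiag p1, b40, b41]; decide)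
    rw [b20, b21, h24] at hq
    exact absurd hq (by decide)
  · exfalso
    have b10 : c p1 p0 = 3 := by rw [hskew p0 p1, e01]; decide
    have b40 : c p4 p0 = 1 := by rw [hskew p0 p4, h04]; decide
    have b41 : c p4 p1 = 3 := by rw [hskew p1 p4, h14]; decide
    have hq := hlin p0 p0 p1 p4 p1 (by rw [hdiag p0, b10, b40, b41]; decide)
    rw [b10, hdiag p1, h14] at hq
    exact absurd hq (by decide)
  · exact absurd h04 (hR0 p0 p4 d04)
  · exact h04
  · exfalso
    have b20 : c p2 p0 = 3 := by rw [hskew p0 p2, h02]; decide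
    have b40 : c p4 p0 = 2 := by rw [hskew p0 p4, h04]; decide
    have hq := hlin p0 p0 p4 p4 p2 (by rw [hdiag p0, b40, hdiag p4]; decide)
    rw [b20, h24] at hq
    exact absurd hq (by decide)
  · exfalso
    have b10 : c p1 p0 = 3 := by rw [hskew p0 p1, e01]; decide
    have b20 : c p2 p0 = 3 := by rw [hskew p0 p2, h02]; decide
    have b40 : c p4 p0 = 1 := by rw [hskew p0 p4, h04]; decide
    have b42 : c p4 p2 = 2 := by rw [hskew p2 p4, h24]; decide
    have hq := hlin p0 p0 p2 p4 p1 (by rw [hdiag p0, b20, b40, b42]; decide)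
    rw [b10, e12, h14] at hq
    exact absurd hq (by decide)
  · exact absurd h04 (hR0 p0 p4 d04)
  · exact h04
  · exfalso
    have b20 : c p2 p0 = 2 := by rw [hskew p0 p2, h02]; decide
    have b40 : c p4 p0 = 2 := by rw [hskew p0 p4, h04]; decide
    have b42 : c p4 p2 = 3 := by rw [hskew p2 p4, h24]; decide
    have hq := hlin p0 p0 p2 p2 p4 (by rw [hdiag p0, b20, hdiag p2]; decide)
    rw [b40, b42] at hq
    exact absurd hq (by decide)
  · exfalso
    have b10 : c p1 p0 = 3 := by rw [hskew p0 p1, e01]; decide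
    have b40 : c p4 p0 = 1 := by rw [hskew p0 p4, h04]; decide
    have b41 : c p4 p1 = 3 := by rw [hskew p1 p4, h14]; decide
    have hq := hlin p0 p0 p1 p4 p1 (by rw [hdiag p0, b10, b40, b41]; decide)
    rw [b10, hdiag p1, h14] at hq
    exact absurd hq (by decide)
  · exact absurd h04 (hR0 p0 p4 d04)
  · exact h04
  · exfalso
    have b10 : c p1 p0 = 3 := by rw [hskew p0 p1, e01]; decide
    have b20 : c p2 p0 = 2 := by rw [hskew p0 p2, h02]; decide
    have b21 : c p2 p1 = 3 := by rw [hskew p1 p2, e12]; decide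
    have b40 : c p4 p0 = 2 := by rw [hskew p0 p4, h04]; decide
    have b41 : c p4 p1 = 3 := by rw [hskew p1 p4, h14]; decide
    have b42 : c p4 p2 = 2 := by rw [hskew p2 p4, h24]; decide
    have hq := hlin p0 p1 p1 p2 p4 (by rw [b10, hdiag p1, b20, b21]; decide)
    rw [b40, b41, b42] at hq
    exact absurd hq (by decide)
  · exfalso
    have b10 : c p1 p0 = 3 := by rw [hskew p0 p1, e01]; decide
    have b40 : c p4 p0 = 1 := by rw [hskew p0 p4, h04]; decide
    have b41 : c p4 p1 = 3 := by rw [hskew p1 p4, h14]; decide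
    have hq := hlin p0 p0 p1 p4 p1 (by rw [hdiag p0, b10, b40, b41]; decide)
    rw [b10, hdiag p1, h14] at hq
    exact absurd hq (by decide)
  · rw [h13] at h13b; exact absurd h13b (by decide)
  · rw [h13] at h13b; exact absurd h13b (by decide)
  · rw [h13] at h13b; exact absurd h13b (by decide)
  · rw [h13] at h13b; exact absurd h13b (by decide)
  · rw [h13] at h13b; exact absurd h13b (by decide)
  · rw [h13] at h13b; exact absurd h13b (by decide)
  · rw [h13] at h13b; exact absurd h13b (by decide)
  · rw [h13] at h13b; exact absurd h13b (by decide)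
  · rw [h13] at h13b; exact absurd h13b (by decide)
  · rw [h13] at h13b; exact absurd h13b (by decide)
  · rw [h13] at h13b; exact absurd h13b (by decide)
  · rw [h13] at h13b; exact absurd h13b (by decide)
  · rw [h13] at h13b; exact absurd h13b (by decide)
  · rw [h13] at h13b; exact absurd h13b (by decide)
  · rw [h13] at h13b; exact absurd h13b (by decide)
  · rw [h13] at h13b; exact absurd h13b (by decide)
  · exact absurd h04 (hR0 p0 p4 d04)
  · exact h04
  · exfalso
    have b10 : c p1 p0 = 3 := by rw [hskew p0 p1, e01]; decide
    have b30 : c p3 p0 = 1 := by rw [hskew p0 p3, h03]; decide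
    have b31 : c p3 p1 = 2 := by rw [hskew p1 p3, h13]; decide
    have b40 : c p4 p0 = 2 := by rw [hskew p0 p4, h04]; decide
    have b41 : c p4 p1 = 3 := by rw [hskew p1 p4, h14]; decide
    have b43 : c p4 p3 = 3 := by rw [hskew p3 p4, e34]; decide
    have hq := hlin p0 p0 p1 p3 p4 (by rw [hdiag p0, b10, b30, b31]; decide)
    rw [b40, b41, b43] at hq
    exact absurd hq (by decide)
  · exfalso
    have b10 : c p1 p0 = 3 := by rw [hskew p0 p1, e01]; decide
    have b40 : c p4 p0 = 1 := by rw [hskew p0 p4, h04]; decide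
    have b41 : c p4 p1 = 3 := by rw [hskew p1 p4, h14]; decide
    have hq := hlin p0 p0 p1 p4 p1 (by rw [hdiag p0, b10, b40, b41]; decide)
    rw [b10, hdiag p1, h14] at hq
    exact absurd hq (by decide)
  · exact absurd h04 (hR0 p0 p4 d04)
  · exact h04
  · exfalso
    have b10 : c p1 p0 = 3 := by rw [hskew p0 p1, e01]; decide
    have b20 : c p2 p0 = 2 := by rw [hskew p0 p2, h02]; decide
    have b21 : c p2 p1 = 3 := by rw [hskew p1 p2, e12]; decide
    have b40 : c p4 p0 = 2 := by rw [hskew p0 p4, h04]; decide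
    have b41 : c p4 p1 = 1 := by rw [hskew p1 p4, h14]; decide
    have b42 : c p4 p2 = 2 := by rw [hskew p2 p4, h24]; decide
    have hq := hlin p0 p1 p1 p2 p4 (by rw [b10, hdiag p1, b20, b21]; decide)
    rw [b40, b41, b42] at hq
    exact absurd hq (by decide)
  · exfalso
    have b10 : c p1 p0 = 3 := by rw [hskew p0 p1, e01]; decide
    have b30 : c p3 p0 = 1 := by rw [hskew p0 p3, h03]; decide
    have b31 : c p3 p1 = 2 := by rw [hskew p1 p3, h13]; decide
    have b40 : c p4 p0 = 1 := by rw [hskew p0 p4, h04]; decide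
    have b41 : c p4 p1 = 1 := by rw [hskew p1 p4, h14]; decide
    have b43 : c p4 p3 = 3 := by rw [hskew p3 p4, e34]; decide
    have hq := hlin p0 p0 p1 p3 p4 (by rw [hdiag p0, b10, b30, b31]; decide)
    rw [b40, b41, b43] at hq
    exact absurd hq (by decide)

end Comb


section CY
variable {I : Type*} (c : I → I → ZMod 4)

def CY (s : ℕ) : Prop :=
  ∃ w : ℕ → I, (∀ a, a < s → ∀ b, b < s → a ≠ b → w a ≠ w b) ∧
    (∀ a, a + 1 < s → c (w a) (w (a + 1)) = 1) ∧ c (w (s - 1)) (w 0) = 1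

variable (hdiag : ∀ k, c k k = 0) (hskew : ∀ k l, c l k = -c k l)
  (hR0 : ∀ k l, k ≠ l → c k l ≠ 0)
  (hlin : ∀ k1 k2 k3 k4 j : I,
    zG (c k2 k1) (c k3 k1) (c k3 k2) (c k4 k1) (c k4 k2) (c k4 k3) ≠ 0 →
    c j k1 + c j k2 + c j k3 + c j k4 = 0)

include hdiag hskew hR0 hlin

theorem CY2 : CY c 2 → False := by
  rintro ⟨w, hinj, he, hw⟩
  have e01 : c (w 0) (w 1) = 1 := he 0 (by norm_num)
  have hw1 : c (w 1) (w 0) = 1 := hw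
  have := hskew (w 0) (w 1)
  rw [hw1, e01] at this
  exact absurd this (by decide)

theorem CY3 : CY c 3 → False := by
  rintro ⟨w, hinj, he, hw⟩
  have e01 : c (w 0) (w 1) = 1 := he 0 (by norm_num)
  have e12 : c (w 1) (w 2) = 1 := he 1 (by norm_num)
  have hw1 : c (w 2) (w 0) = 1 := hw
  have h02 : c (w 0) (w 2) = 3 := by rw [hskew (w 2) (w 0), hw1]; decide
  have d01 : w 0 ≠ w 1 := hinj 0 (by norm_num) 1 (by norm_num) (by norm_num)
  have d12 : w 1 ≠ w 2 := hinj 1 (by norm_num) 2 (by norm_num) (by norm_num)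
  have d02 : w 0 ≠ w 2 := hinj 0 (by norm_num) 2 (by norm_num) (by norm_num)
  rcases La c hdiag hskew hR0 hlin d01 d12 d02 e01 e12 with h | h <;>
    rw [h02] at h <;> exact absurd h (by decide)

theorem W5' {w : ℕ → I} {s : ℕ} (hinj : ∀ a, a < s → ∀ b, b < s → a ≠ b → w a ≠ w b)
    (q0 q1 q2 q3 q4 : ℕ) (h0 : q0 < s) (h1 : q1 < s) (h2 : q2 < s) (h3 : q3 < s)
    (h4 : q4 < s) (hd : q0 ≠ q1 ∧ q0 ≠ q2 ∧ q0 ≠ q3 ∧ q0 ≠ q4 ∧ q1 ≠ q2 ∧ q1 ≠ q3 ∧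
      q1 ≠ q4 ∧ q2 ≠ q3 ∧ q2 ≠ q4 ∧ q3 ≠ q4)
    (e01 : c (w q0) (w q1) = 1) (e12 : c (w q1) (w q2) = 1)
    (e23 : c (w q2) (w q3) = 1) (e34 : c (w q3) (w q4) = 1) :
    c (w q0) (w q4) = 1 := by
  obtain ⟨a1, a2, a3, a4, a5, a6, a7, a8, a9, a10⟩ := hd
  exact W5 c hdiag hskew hR0 hlin (hinj _ h0 _ h1 a1) (hinj _ h0 _ h2 a2)
    (hinj _ h0 _ h3 a3) (hinj _ h0 _ h4 a4) (hinj _ h1 _ h2 a5) (hinj _ h1 _ h3 a6)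
    (hinj _ h1 _ h4 a7) (hinj _ h2 _ h3 a8) (hinj _ h2 _ h4 a9) (hinj _ h3 _ h4 a10)
    e01 e12 e23 e34

theorem CYred {s : ℕ} (h5 : 5 ≤ s) : CY c s → CY c (s - 3) := by
  rintro ⟨w, hinj, he, hw⟩
  refine ⟨fun a => if a = 0 then w 0 else w (a + 3), ?_, ?_, ?_⟩
  · intro a ha b hb hab
    by_cases ha0 : a = 0 <;> by_cases hb0 : b = 0 <;>
      simp only [ha0, hb0, if_pos, if_neg, ite_true, ite_false]
    · exact absurd (by omega : a = b) hab
    · exact hinj 0 (by omega) (b + 3) (by omega) (by omega)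
    · exact hinj (a + 3) (by omega) 0 (by omega) (by omega)
    · exact hinj (a + 3) (by omega) (b + 3) (by omega) (by omega)
  · intro a ha
    by_cases ha0 : a = 0
    · subst ha0
      simp only [ite_true, ite_false, if_neg (by omega : (1:ℕ) ≠ 0)]
      simp only [show (1:ℕ) + 3 = 4 from rfl]
      exact W5' c hdiag hskew hR0 hlin hinj 0 1 2 3 4 (by omega) (by omega) (by omega)
        (by omega) (by omega) (by omega) (he 0 (by omega)) (he 1 (by omega))
        (he 2 (by omega)) (he 3 (by omega))
    · simp only [if_neg ha0, if_neg (by omega : a + 1 ≠ 0)]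
      have : a + 1 + 3 = (a + 3) + 1 := by omega
      rw [this]
      exact he (a + 3) (by omega)
  · simp only [if_neg (by omega : s - 3 - 1 ≠ 0), ite_true, if_pos rfl]
    have : s - 3 - 1 + 3 = s - 1 := by omega
    rw [this]
    exact hw

theorem CY7 : CY c 7 → CY c 5 := by
  rintro ⟨w, hinj, he, hw⟩
  have hw6 : c (w 6) (w 0) = 1 := hw
  have E1 : c (w 0) (w 4) = 1 :=
    W5' c hdiag hskew hR0 hlin hinj 0 1 2 3 4 (by omega) (by omega) (by omega) (by omega)
      (by omega) (by omega) (he 0 (by omega)) (he 1 (by omega)) (he 2 (by omega))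
      (he 3 (by omega))
  have E2 : c (w 4) (w 1) = 1 :=
    W5' c hdiag hskew hR0 hlin hinj 4 5 6 0 1 (by omega) (by omega) (by omega) (by omega)
      (by omega) (by omega) (he 4 (by omega)) (he 5 (by omega)) hw6 (he 0 (by omega))
  have E3 : c (w 1) (w 5) = 1 :=
    W5' c hdiag hskew hR0 hlin hinj 1 2 3 4 5 (by omega) (by omega) (by omega) (by omega)
      (by omega) (by omega) (he 1 (by omega)) (he 2 (by omega)) (he 3 (by omega))
      (he 4 (by omega))
  refine ⟨fun a => w (if a = 0 then 0 else if a = 1 then 4 else if a = 2 then 1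
    else if a = 3 then 5 else 6), ?_, ?_, ?_⟩
  · intro a ha b hb hab
    interval_cases a <;> interval_cases b <;>
      first
        | exact absurd rfl hab
        | (norm_num; exact hinj _ (by omega) _ (by omega) (by omega))
  · intro a ha
    have ha4 : a < 4 := by omega
    interval_cases a
    · norm_num; exact E1
    · norm_num; exact E2
    · norm_num; exact E3
    · norm_num; exact he 5 (by omega)
  · norm_num; exact hw6

theorem noCY : ∀ s, 2 ≤ s → s ≠ 4 → CY c s → False := by
  intro s
  induction s using Nat.strong_induction_on with
  | _ s ih =>
    intro hs2 hs4 hcy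
    rcases Nat.lt_or_ge s 5 with h5 | h5
    · interval_cases s
      · exact CY2 c hdiag hskew hR0 hlin hcy
      · exact CY3 c hdiag hskew hR0 hlin hcy
      · exact absurd rfl hs4
    · by_cases h7 : s = 7
      · subst h7
        exact ih 5 (by omega) (by omega) (by omega) (CY7 c hdiag hskew hR0 hlin hcy)
      · exact ih (s - 3) (by omega) (by omega) (by omega)
          (CYred c hdiag hskew hR0 hlin h5 hcy)

end CY

open Fin.NatCast in
theorem combFalse {r : ℕ} [NeZero r] (hr2 : 2 ≤ r) (hr4 : r ≠ 4) (c : Fin r → Fin r → ZMod 4)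
    (hdiag : ∀ k, c k k = 0) (hskew : ∀ k l, c l k = -c k l)
    (hR0 : ∀ k l, k ≠ l → c k l ≠ 0)
    (hlin : ∀ k1 k2 k3 k4 j,
      zG (c k2 k1) (c k3 k1) (c k3 k2) (c k4 k1) (c k4 k2) (c k4 k3) ≠ 0 →
      c j k1 + c j k2 + c j k3 + c j k4 = 0)
    (hedge : ∀ k, c k (k + 1) = 1) : False := by
  apply noCY c hdiag hskew hR0 hlin r hr2 hr4
  refine ⟨fun a => (a : Fin r), ?_, ?_, ?_⟩
  · intro a ha b hb hab h
    have h2 := congrArg Fin.val h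
    rw [Fin.val_cast_of_lt ha, Fin.val_cast_of_lt hb] at h2
    exact hab h2
  · intro a ha
    show c ((a : ℕ) : Fin r) (((a + 1 : ℕ) : Fin r)) = 1
    have h1 : ((a + 1 : ℕ) : Fin r) = (a : Fin r) + 1 := by push_cast; ring
    rw [h1]
    exact hedge _
  · have h1 : ((r - 1 : ℕ) : Fin r) + 1 = ((0 : ℕ) : Fin r) := by
      have h2 : ((r - 1 : ℕ) : Fin r) + 1 = ((r - 1 + 1 : ℕ) : Fin r) := by push_cast; ring
      rw [h2, (by omega : r - 1 + 1 = r)]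
      simp
    show c (((r - 1 : ℕ) : Fin r)) (((0 : ℕ) : Fin r)) = 1
    rw [← h1]
    exact hedge _

end
end St10

/-- There are no directed cycles of length other than 4 among distinct monomials
spanning a Kummer space: for `r ≥ 2`, `r ≠ 4` (written `r = m + 2` below), distinct
monomials `v₀, …, v_{r-1}` cannot satisfy `vₖ v_{k+1} = i · v_{k+1} vₖ` cyclically. -/
theorem statement10 {F A : Type*} [Field F] [CharZero F] [DivisionRing A] [Algebra F A]
    (i : F) (hi : i ^ 2 = -1) (n : ℕ) (hn : 1 ≤ n)
    (P : TensorCyclicPres F A i n) (hdim : Module.finrank F A = 16 ^ n)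
    (m : ℕ) (hr : m + 2 ≠ 4) (v : Fin (m + 2) → A)
    (hmon : ∀ k, P.IsMonomial (v k)) (hinj : Function.Injective v)
    (hK : ∀ u ∈ Submodule.span F (Set.range v), u ^ 4 ∈ Set.range (algebraMap F A)) :
    ¬ ∀ k : Fin (m + 2), v k * v (k + 1) = i • (v (k + 1) * v k) := by
  intro hcyc
  choose aa bb hab using hmon
  have hab' : ∀ k, v k = St10.mexp P (aa k) (bb k) := hab
  have hvne : ∀ k, v k ≠ 0 := fun k => by
    rw [hab' k]; exact St10.mexp_ne_zero P _ _
  have hex : ∀ k l, ∃ γ, St10.UC i (v k) (v l) γ := fun k l => by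
    rw [hab' k, hab' l]; exact St10.UC_mexp_mexp P hi _ _ _ _
  choose c hc using hex
  have hcu : ∀ k l γ, St10.UC i (v k) (v l) γ → c k l = γ := fun k l γ h =>
    St10.UC.unique hi (hc k l) h (mul_ne_zero (hvne l) (hvne k))
  have hdiag : ∀ k, c k k = 0 := fun k => hcu k k 0 (St10.UC.refl _)
  have hskew : ∀ k l, c l k = -c k l := fun k l => hcu l k _ (St10.UC.symm hi (hc k l))
  have hedge : ∀ k, c k (k + 1) = 1 := fun k => hcu _ _ 1 (by
    show v k * v (k + 1) = i ^ (1 : ZMod 4).val • (v (k + 1) * v k)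
    rw [show (1 : ZMod 4).val = 1 from rfl, pow_one]
    exact hcyc k)
  have hmem : ∀ k, v k ∈ Submodule.span F (Set.range v) := fun k =>
    Submodule.subset_span ⟨k, rfl⟩
  have hK1 : ∀ u ∈ Submodule.span F (Set.range v), u ^ 4 ∈ Submodule.span F {(1 : A)} := by
    intro u hu
    obtain ⟨μ, hμ⟩ := hK u hu
    rw [← hμ, Algebra.algebraMap_eq_smul_one]
    exact Submodule.smul_mem _ _ (Submodule.mem_span_singleton_self 1)
  have hprod : ∀ k1 k2 k3 k4,
      St10.zG (c k2 k1) (c k3 k1) (c k3 k2) (c k4 k1) (c k4 k2) (c k4 k3) ≠ 0 →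
      ∃ μ : F, μ ≠ 0 ∧ v k1 * (v k2 * (v k3 * v k4)) = μ • 1 := by
    intro k1 k2 k3 k4 hz
    have hq := St10.quadCore hi _ hK1 (hmem k1) (hmem k2) (hmem k3) (hmem k4)
      (hc k2 k1) (hc k3 k1) (hc k3 k2) (hc k4 k1) (hc k4 k2) (hc k4 k3)
    obtain ⟨μ0, hμ0⟩ := Submodule.mem_span_singleton.mp hq
    set z := St10.phi i hi (St10.zG (c k2 k1) (c k3 k1) (c k3 k2) (c k4 k1)
      (c k4 k2) (c k4 k3)) with hzdef
    have hphine : z ≠ 0 := St10.phi_ne_zero hi hz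
    have hW0 : v k1 * (v k2 * (v k3 * v k4)) ≠ 0 :=
      mul_ne_zero (hvne k1) (mul_ne_zero (hvne k2) (mul_ne_zero (hvne k3) (hvne k4)))
    have h1 : v k1 * (v k2 * (v k3 * v k4)) = (z⁻¹ * μ0) • (1 : A) := by
      rw [← smul_smul, hμ0, smul_smul, inv_mul_cancel₀ hphine, one_smul]
    exact ⟨z⁻¹ * μ0, fun h0 => hW0 (by rw [h1, h0, zero_smul]), h1⟩
  have hlin : ∀ k1 k2 k3 k4 j,
      St10.zG (c k2 k1) (c k3 k1) (c k3 k2) (c k4 k1) (c k4 k2) (c k4 k3) ≠ 0 →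
      c j k1 + c j k2 + c j k3 + c j k4 = 0 := by
    intro k1 k2 k3 k4 j hz
    obtain ⟨μ, hμ, hWs⟩ := hprod k1 k2 k3 k4 hz
    have hU : St10.UC i (v j) (v k1 * (v k2 * (v k3 * v k4)))
        (c j k1 + (c j k2 + (c j k3 + c j k4))) :=
      St10.UC.mul_right hi (hc j k1) (St10.UC.mul_right hi (hc j k2)
        (St10.UC.mul_right hi (hc j k3) (hc j k4)))
    have hU0 : St10.UC i (v j) (v k1 * (v k2 * (v k3 * v k4))) 0 := by
      show v j * _ = i ^ (0 : ZMod 4).val • (_ * v j)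
      rw [show (0 : ZMod 4).val = 0 from rfl, pow_zero, one_smul, hWs,
        smul_mul_assoc, one_mul, mul_smul_comm, mul_one]
    have hkey := St10.UC.unique hi hU hU0 (by
      rw [hWs, smul_mul_assoc, one_mul]
      exact smul_ne_zero hμ (hvne j))
    rw [← hkey]
    ring
  have hrig : ∀ k l (μ : F), μ ≠ 0 → v l = μ • v k → l = k := by
    intro k l μ hμ he
    have hbx : ∀ t, bb l t = bb k t := by
      intro t
      have h1 : P.x t * v k = i ^ (((bb k t : ℕ) : ZMod 4)).val • (v k * P.x t) := by
        rw [hab' k]; exact St10.UC_x_mexp P hi _ _ t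
      have h2 : St10.UC i (P.x t) (v l) (((bb l t : ℕ) : ZMod 4)) := by
        rw [hab' l]; exact St10.UC_x_mexp P hi _ _ t
      have h3 : St10.UC i (P.x t) (v l) (((bb k t : ℕ) : ZMod 4)) := by
        show P.x t * v l = _ • (v l * P.x t)
        rw [he, mul_smul_comm, smul_mul_assoc, h1, smul_comm]
      have h4 := St10.UC.unique hi h2 h3 (mul_ne_zero (hvne l) (St10.x_ne_zero P t))
      have hval := congrArg ZMod.val h4
      rw [ZMod.val_natCast_of_lt (bb l t).is_lt, ZMod.val_natCast_of_lt (bb k t).is_lt] at hval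
      exact Fin.ext hval
    have hax : ∀ t, aa l t = aa k t := by
      intro t
      have h1 : P.y t * v k = i ^ (-((aa k t : ℕ) : ZMod 4)).val • (v k * P.y t) := by
        rw [hab' k]; exact St10.UC_y_mexp P hi _ _ t
      have h2 : St10.UC i (P.y t) (v l) (-((aa l t : ℕ) : ZMod 4)) := by
        rw [hab' l]; exact St10.UC_y_mexp P hi _ _ t
      have h3 : St10.UC i (P.y t) (v l) (-((aa k t : ℕ) : ZMod 4)) := by
        show P.y t * v l = _ • (v l * P.y t)
        rw [he, mul_smul_comm, smul_mul_assoc, h1, smul_comm]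
      have h4 := St10.UC.unique hi h2 h3 (mul_ne_zero (hvne l) (St10.y_ne_zero P t))
      have h5 := neg_inj.mp h4
      have hval := congrArg ZMod.val h5
      rw [ZMod.val_natCast_of_lt (aa l t).is_lt, ZMod.val_natCast_of_lt (aa k t).is_lt] at hval
      exact Fin.ext hval
    apply hinj
    rw [hab' l, hab' k, show aa l = aa k from funext hax, show bb l = bb k from funext hbx]
  have hR0 : ∀ k l, k ≠ l → c k l ≠ 0 := by
    intro k l hkl h0
    have hlk : c l k = 0 := by rw [hskew k l, h0, neg_zero]
    obtain ⟨μ, hμ, hWs⟩ := hprod k k k l (by rw [hdiag k, hlk]; decide)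
    obtain ⟨ν, hν⟩ := hK (v k) (hmem k)
    have hν0 : ν ≠ 0 := fun h => (pow_ne_zero 4 (hvne k)) (by rw [← hν, h, map_zero])
    have h4 : v k ^ 4 * v l = v k * (v k * (v k * (v k * v l))) := by
      rw [pow_succ, pow_succ, pow_succ, pow_succ, pow_zero, one_mul]
      simp [mul_assoc]
    have h5 : v k * (v k * (v k * (v k * v l))) = μ • v k := by
      rw [hWs, mul_smul_comm, mul_one]
    have h6 : ν • v l = μ • v k := by
      calc ν • v l = algebraMap F A ν * v l := Algebra.smul_def ν (v l)
        _ = v k ^ 4 * v l := by rw [hν]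
        _ = v k * (v k * (v k * (v k * v l))) := h4
        _ = μ • v k := h5
    have h7 : v l = (ν⁻¹ * μ) • v k := by
      calc v l = ν⁻¹ • (ν • v l) := by rw [smul_smul, inv_mul_cancel₀ hν0, one_smul]
        _ = ν⁻¹ • (μ • v k) := by rw [h6]
        _ = (ν⁻¹ * μ) • v k := by rw [smul_smul]
    exact hkl (hrig k l _ (mul_ne_zero (inv_ne_zero hν0) hμ) h7).symm
  exact St10.combFalse (by omega) hr c hdiag hskew hR0 hlin hedge
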